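/- Let A be a unital C*-algebra and φ : A → ℂ continuous with φ(1) = 1 and φ(x)φ(y) ∈ σ(xy) for all x,y. If x is self-adjoint and φ(x) ≠ 0, then φ(1 + ix) = 1 + iφ(x). -/

import Mathlib

variable {A : Type*} [NormedRing A] [StarRing A] [CStarRing A] [NormedAlgebra ℂ A] [CompleteSpace A] [StarModule ℂ A]

set_option maxHeartbeats 1000000 in
theorem stmt_10 (φ : A → ℂ) (hc : Continuous φ)
    (hone : φ 1 = 1)
    (hmul : ∀ x y : A, φ x * φ y ∈ spectrum ℂ (x * y))
    (x : A) (hx : IsSelfAdjoint x) (hφx : φ x ≠ 0) :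
    φ (1 + Complex.I • x) = 1 + Complex.I * φ x := by
  letI : CStarAlgebra A := { }
  have hnormal : IsStarNormal x := ⟨by rw [hx.star_eq]⟩
  have hx_spec : φ x ∈ spectrum ℂ x := by simpa [hone] using hmul x 1
  have hφre : φ x = ((φ x).re : ℂ) := hx.mem_spectrum_eq_re hx_spec
  -- express 1 + I • x via cfc
  have h1 : (1 : A) + Complex.I • x = cfc (fun s : ℂ => 1 + Complex.I * s) x := by
    rw [cfc_add .., cfc_const_mul .., cfc_id' ℂ x, cfc_const 1 x, map_one]
  have h2 : x * ((1 : A) + Complex.I • x) = cfc (fun s : ℂ => s * (1 + Complex.I * s)) x := by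
    rw [cfc_mul .., cfc_add .., cfc_const_mul .., cfc_id' ℂ x, cfc_const 1 x, map_one]
  set z : A := 1 + Complex.I • x
  have hz_spec : φ z ∈ spectrum ℂ z := by simpa [hone] using hmul z 1
  rw [show z = cfc (fun s : ℂ => 1 + Complex.I * s) x from h1,
    cfc_map_spectrum (fun s : ℂ => 1 + Complex.I * s) x] at hz_spec
  obtain ⟨t, ht, htz⟩ := hz_spec
  have htre : t = (t.re : ℂ) := hx.mem_spectrum_eq_re ht
  have hzval : φ z = 1 + Complex.I * t := by rw [h1]; exact htz.symm
  have hmz := hmul x z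
  rw [h2, cfc_map_spectrum (fun s : ℂ => s * (1 + Complex.I * s)) x] at hmz
  obtain ⟨s, hs, hsz⟩ := hmz
  have hsre : s = (s.re : ℂ) := hx.mem_spectrum_eq_re hs
  -- equation: s + I s^2 = φx + I φx t, with s, t, φx real
  rw [hzval] at hsz
  rw [hsre, htre, hφre] at hsz
  set a := s.re; set b := t.re; set c := (φ x).re
  have hre : a = c := by
    have := congrArg Complex.re hsz
    simpa [Complex.ext_iff, mul_comm] using this
  have him : a * a = c * b := by
    have := congrArg Complex.im hsz
    simpa [Complex.ext_iff, mul_comm, mul_assoc, mul_left_comm] using this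
  have hc0 : c ≠ 0 := by
    intro h
    apply hφx
    rw [hφre, h, Complex.ofReal_zero]
  have hbc : b = c := by
    rw [hre] at him
    field_simp at him
    linarith
  rw [hzval, htre, hbc, hφre]
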